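/- Let c(H) = inf{c ∈ ℝ : H(c) ≠ ∅}, where H(c) is the set of functions dominated by L + c, and assume this infimum is finite. Then H(c(H)) ≠ ∅: the sets H(c) for c > c(H) are nonempty nested compact (modulo constants) sets, and there exists a function u dominated by L + c(H). -/

import Mathlib

open intervalIntegral

/-- A function `u` is dominated by `L + c`. -/
def Dominated {E : Type*} [NormedAddCommGroup E] [NormedSpace ℝ E]
    (L : E → E → ℝ) (c : ℝ) (u : E → ℝ) : Prop :=
  ∀ a b : ℝ, a ≤ b → ∀ γ γ' : ℝ → E,
    (∀ s, HasDerivAt γ (γ' s) s) → Continuous γ' →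
    u (γ b) - u (γ a) ≤ (∫ s in a..b, L (γ s) (γ' s)) + c * (b - a)

/-- A dominated function is Lipschitz-like with constant `A1 + c`. -/
lemma dominated_lip {E : Type*} [NormedAddCommGroup E] [NormedSpace ℝ E]
    (L : E → E → ℝ) (hLcont : Continuous fun p : E × E => L p.1 p.2)
    (A1 : ℝ) (hA1 : ∀ x v : E, ‖v‖ ≤ 1 → L x v ≤ A1)
    {c : ℝ} {w : E → ℝ} (hw : Dominated L c w) (x y : E) :
    w y - w x ≤ (A1 + c) * ‖y - x‖ := by
  rcases eq_or_ne y x with rfl | hxy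
  · simp
  · set T : ℝ := ‖y - x‖ with hT
    have hTpos : 0 < T := by simpa [hT] using sub_ne_zero.mpr hxy
    set d : E := T⁻¹ • (y - x) with hd
    have hdnorm : ‖d‖ = 1 := by
      rw [hd, norm_smul, norm_inv, Real.norm_eq_abs, abs_of_pos hTpos]
      field_simp
      exact hT.symm
    set γ : ℝ → E := fun s => x + s • d with hγ
    have hderiv : ∀ s, HasDerivAt γ d s := fun s =>
      ((hasDerivAt_id s).smul_const d).const_add x |>.congr_deriv (by simp)
    have hγ0 : γ 0 = x := by simp [hγ]
    have hγT : γ T = y := by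
      rw [hγ]; simp only [hd, smul_smul]
      rw [mul_inv_cancel₀ hTpos.ne', one_smul]; abel
    have key := hw 0 T hTpos.le γ (fun _ => d) hderiv continuous_const
    rw [hγ0, hγT] at key
    have hint : (∫ s in (0:ℝ)..T, L (γ s) d) ≤ A1 * T := by
      have hγc : Continuous γ := by continuity
      have hcont : Continuous fun s => L (γ s) d :=
        hLcont.comp (hγc.prodMk continuous_const)
      calc (∫ s in (0:ℝ)..T, L (γ s) d) ≤ ∫ _ in (0:ℝ)..T, A1 := by
            apply intervalIntegral.integral_mono_on hTpos.le
              (hcont.intervalIntegrable _ _) (intervalIntegrable_const)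
            intro s _
            exact hA1 _ _ (le_of_eq hdnorm)
        _ = A1 * T := by simp [mul_comm]
    calc w y - w x ≤ (∫ s in (0:ℝ)..T, L (γ s) d) + c * (T - 0) := key
      _ ≤ A1 * T + c * T := by rw [sub_zero]; linarith
      _ = (A1 + c) * ‖y - x‖ := by rw [← hT]; ring

theorem critical_value_attained
    {E : Type*} [NormedAddCommGroup E] [NormedSpace ℝ E] [FiniteDimensional ℝ E]
    (L : E → E → ℝ) (hLcont : Continuous fun p : E × E => L p.1 p.2)
    (A1 : ℝ) (hA1 : ∀ x v : E, ‖v‖ ≤ 1 → L x v ≤ A1)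
    (hne : ∃ c : ℝ, ∃ u : E → ℝ, Dominated L c u)
    (hbdd : BddBelow {c : ℝ | ∃ u : E → ℝ, Dominated L c u}) :
    ∃ u : E → ℝ, Dominated L (sInf {c : ℝ | ∃ u : E → ℝ, Dominated L c u}) u := by
  classical
  set S : Set ℝ := {c : ℝ | ∃ u : E → ℝ, Dominated L c u} with hS
  set c₀ : ℝ := sInf S with hc₀
  have hSne : S.Nonempty := hne
  -- S is upward closed
  have hup : ∀ c ∈ S, ∀ c', c ≤ c' → c' ∈ S := by
    rintro c ⟨u, hu⟩ c' hcc'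
    refine ⟨u, fun a b hab γ γ' hγ hγ' => ?_⟩
    calc u (γ b) - u (γ a) ≤ (∫ s in a..b, L (γ s) (γ' s)) + c * (b - a) :=
          hu a b hab γ γ' hγ hγ'
      _ ≤ (∫ s in a..b, L (γ s) (γ' s)) + c' * (b - a) := by
          have : c * (b - a) ≤ c' * (b - a) := mul_le_mul_of_nonneg_right hcc' (by linarith)
          linarith
  -- for each n, c₀ + 1/(n+1) ∈ S
  have hmem : ∀ n : ℕ, (c₀ + 1 / (n + 1)) ∈ S := by
    intro n
    obtain ⟨c, hcS, hc⟩ := Real.lt_sInf_add_pos hSne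
      (show (0:ℝ) < 1 / (n + 1) by positivity)
    exact hup c hcS _ (by rw [hc₀]; exact hc.le)
  choose v hv using fun n => hmem n
  -- normalize
  set w : ℕ → E → ℝ := fun n x => v n x - v n 0 with hw
  have hwdom : ∀ n : ℕ, Dominated L (c₀ + 1 / (n + 1)) (w n) := by
    intro n a b hab γ γ' hγ hγ'
    have := hv n a b hab γ γ' hγ hγ'
    simpa [hw] using this
  -- uniform bounds
  set K : ℝ := |A1| + |c₀| + 1 with hK
  have hbound : ∀ n x, |w n x| ≤ K * ‖x‖ := by
    intro n x
    have hcn : (1:ℝ) / (n + 1) ≤ 1 := by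
      rw [div_le_one (by positivity)]; linarith [Nat.cast_nonneg (α := ℝ) n]
    have hAK : A1 + (c₀ + 1 / (n + 1)) ≤ K := by
      rw [hK]
      have := abs_nonneg A1
      nlinarith [le_abs_self A1, le_abs_self c₀]
    have h1 : w n x - w n 0 ≤ K * ‖x‖ := by
      have := dominated_lip L hLcont A1 hA1 (hwdom n) 0 x
      simp only [sub_zero] at this
      calc w n x - w n 0 ≤ (A1 + (c₀ + 1 / (n + 1))) * ‖x‖ := this
        _ ≤ K * ‖x‖ := mul_le_mul_of_nonneg_right hAK (norm_nonneg _)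
    have h2 : w n 0 - w n x ≤ K * ‖x‖ := by
      have := dominated_lip L hLcont A1 hA1 (hwdom n) x 0
      simp only [zero_sub, norm_neg] at this
      calc w n 0 - w n x ≤ (A1 + (c₀ + 1 / (n + 1))) * ‖x‖ := this
        _ ≤ K * ‖x‖ := mul_le_mul_of_nonneg_right hAK (norm_nonneg _)
    have hw0 : w n 0 = 0 := by simp [hw]
    rw [hw0] at h1 h2
    rw [abs_le]
    constructor <;> linarith
  have hbdd_above : ∀ x, Filter.IsBoundedUnder (· ≤ ·) Filter.atTop (fun n => w n x) :=
    fun x => Filter.isBoundedUnder_of ⟨K * ‖x‖, fun n => (abs_le.mp (hbound n x)).2⟩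
  have hbdd_below : ∀ x, Filter.IsBoundedUnder (· ≥ ·) Filter.atTop (fun n => w n x) :=
    fun x => Filter.isBoundedUnder_of ⟨-(K * ‖x‖), fun n => (abs_le.mp (hbound n x)).1⟩
  have hcobdd : ∀ x, Filter.IsCoboundedUnder (· ≤ ·) Filter.atTop (fun n => w n x) :=
    fun x => (hbdd_below x).isCoboundedUnder_le
  -- the candidate
  refine ⟨fun x => Filter.limsup (fun n => w n x) Filter.atTop, ?_⟩
  intro a b hab γ γ' hγ hγ'
  set I : ℝ := ∫ s in a..b, L (γ s) (γ' s) with hI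
  -- for each m : limsup bound with constant c₀ + 1/(m+1)
  have key : ∀ m : ℕ,
      Filter.limsup (fun n => w n (γ b)) Filter.atTop
        - Filter.limsup (fun n => w n (γ a)) Filter.atTop
        ≤ I + (c₀ + 1 / (m + 1)) * (b - a) := by
    intro m
    have hev : ∀ᶠ n in Filter.atTop,
        w n (γ b) ≤ (I + (c₀ + 1 / (m + 1)) * (b - a)) + w n (γ a) := by
      filter_upwards [Filter.eventually_ge_atTop m] with n hn
      have hle : (1:ℝ) / (n + 1) ≤ 1 / (m + 1) := by
        apply one_div_le_one_div_of_le (by positivity)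
        have : (m:ℝ) ≤ n := Nat.cast_le.mpr hn
        linarith
      have := hwdom n a b hab γ γ' hγ hγ'
      have hmul : (c₀ + 1 / (n + 1)) * (b - a) ≤ (c₀ + 1 / (m + 1)) * (b - a) :=
        mul_le_mul_of_nonneg_right (by linarith) (by linarith)
      rw [← hI] at this
      linarith
    have h1 : Filter.limsup (fun n => w n (γ b)) Filter.atTop
        ≤ Filter.limsup (fun n => (I + (c₀ + 1 / (m + 1)) * (b - a)) + w n (γ a))
            Filter.atTop := by
      refine Filter.limsup_le_limsup hev (hcobdd _)
        (Filter.isBoundedUnder_of ⟨(I + (c₀ + 1 / (m + 1)) * (b - a)) + K * ‖γ a‖,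
          fun n => (add_le_add_iff_left _).mpr (abs_le.mp (hbound n (γ a))).2⟩)
    rw [limsup_const_add Filter.atTop (fun n => w n (γ a)) _
      (hbdd_above _) (hcobdd _)] at h1
    linarith
  -- pass to the limit m → ∞
  have htend : Filter.Tendsto (fun m : ℕ => I + (c₀ + 1 / (m + 1)) * (b - a))
      Filter.atTop (nhds (I + c₀ * (b - a))) := by
    have h1 : Filter.Tendsto (fun m : ℕ => (1:ℝ) / (m + 1)) Filter.atTop (nhds 0) :=
      tendsto_one_div_add_atTop_nhds_zero_nat
    have := ((h1.const_add c₀).mul_const (b - a)).const_add I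
    simpa using this
  have := ge_of_tendsto htend (Filter.Eventually.of_forall key)
  exact this
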